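/- Let C ⊆ F_q^n be a linear code of dimension k with minimum distance d. For any I ⊆ [n] with |I| < k, the shortened code {c restricted to [n]\Cl(I) : c ∈ C, c_I = 0} has dimension at least k - |I| (in particular it is nonzero) and minimum distance at least d; consequently d ≤ d*_q(n - |Cl(I)|, k - |I|), where d*_q(N, K) denotes the maximum minimum distance of any linear code over F_q of length N and dimension at least K. -/

import Mathlib

set_option synthInstance.maxHeartbeats 800000
set_option maxHeartbeats 1000000

open scoped Classical

/-- d*_q(N, K): the largest d such that some linear code over F_q of length N and
dimension at least K has all nonzero codewords of Hamming weight at least d. -/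
noncomputable def dstar (F : Type*) [Field F] [Fintype F] [DecidableEq F] (N K : ℕ) : ℕ :=
  sSup {d | ∃ D : Submodule F (Fin N → F),
    K ≤ Module.finrank F D ∧ ∀ c ∈ D, c ≠ 0 → d ≤ hammingNorm c}

lemma hammingNorm_comp_equiv {F : Type*} [DecidableEq F] [Zero F]
    {α β : Type*} [Fintype α] [Fintype β] (e : α ≃ β) (f : β → F) :
    hammingNorm (f ∘ e) = hammingNorm f := by
  classical
  simp only [hammingNorm]
  apply Finset.card_bij (fun a _ => e a)
  · intro a ha; simpa using (Finset.mem_filter.mp ha).2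
  · intro a _ b _ h; exact e.injective h
  · intro b hb
    exact ⟨e.symm b, by simpa using (Finset.mem_filter.mp hb).2, by simp⟩

/-- Distance form of the shortening bound: for |I| < k the shortened code has
dimension at least k − |I| and minimum distance at least d, hence
d ≤ d*_q(n − |Cl(I)|, k − |I|). -/
theorem stmt3 (F : Type*) [Field F] [Fintype F] [DecidableEq F]
    (n k d : ℕ) (C : Submodule F (Fin n → F))
    (hk : Module.finrank F C = k)
    (hd : ∀ c ∈ C, c ≠ 0 → d ≤ hammingNorm c)
    (I Cl : Set (Fin n))
    (hCl : Cl = {i | ∀ c ∈ C, ∀ c' ∈ C, (∀ j ∈ I, c j = c' j) → c i = c' i})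
    (hI : I.ncard < k) :
    ∀ S : Submodule F (Fin n → F),
      S = C ⊓ ⨅ i ∈ I, LinearMap.ker (LinearMap.proj (R := F) (φ := fun _ : Fin n => F) i) →
    ∀ D : Submodule F ({i : Fin n // i ∉ Cl} → F),
      D = S.map (LinearMap.funLeft F F Subtype.val) →
      k - I.ncard ≤ Module.finrank F D ∧
      (∀ y ∈ D, y ≠ 0 → d ≤ hammingNorm y) ∧
      d ≤ dstar F (n - Cl.ncard) (k - I.ncard) := by
  intro S hS D hD
  classical
  set g := LinearMap.funLeft F F (Subtype.val : {i : Fin n // i ∉ Cl} → Fin n) with hg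
  have hSC : S ≤ C := hS ▸ inf_le_left
  have hSI : ∀ c ∈ S, ∀ i ∈ I, c i = 0 := by
    intro c hc i hi
    rw [hS] at hc
    have h2 := (Submodule.mem_inf.mp hc).2
    simp only [Submodule.mem_iInf, LinearMap.mem_ker, LinearMap.proj_apply] at h2
    exact h2 i hi
  have hSCl : ∀ c ∈ S, ∀ i ∈ Cl, c i = 0 := by
    intro c hc i hi
    rw [hCl] at hi
    have := hi c (hSC hc) 0 (Submodule.zero_mem C) (fun j hj => by simp [hSI c hc j hj])
    simpa using this
  -- injectivity of g on S
  have hker : ∀ c ∈ S, g c = 0 → c = 0 := by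
    intro c hc h0
    funext i
    by_cases hi : i ∈ Cl
    · exact hSCl c hc i hi
    · have := congrFun h0 ⟨i, hi⟩
      simpa [hg, LinearMap.funLeft] using this
  -- norm preservation on S
  have hnorm : ∀ c ∈ S, hammingNorm c = hammingNorm (g c) := by
    intro c hc
    have key : (Finset.univ.filter fun i : Fin n => c i ≠ 0).card
        = (Finset.univ.filter fun j : {i : Fin n // i ∉ Cl} => c j.val ≠ 0).card := by
      refine Finset.card_bij
        (fun a ha => (⟨a, fun hmem =>
          (Finset.mem_filter.mp ha).2 (hSCl c hc a hmem)⟩ : {i : Fin n // i ∉ Cl}))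
        ?_ ?_ ?_
      · intro a ha
        simpa using (Finset.mem_filter.mp ha).2
      · intro a ha b hb h
        exact congrArg Subtype.val h
      · intro b hb
        refine ⟨b.val, ?_, rfl⟩
        simpa using (Finset.mem_filter.mp hb).2
    simpa [hammingNorm, hg, LinearMap.funLeft_apply] using key
  -- dimension of S
  have hIfin : I.Finite := Set.toFinite I
  have hrankS : k - I.ncard ≤ Module.finrank F S := by
    let f : (Fin n → F) →ₗ[F] (I → F) :=
      LinearMap.funLeft F F (Subtype.val : I → Fin n)
    have hkerf : LinearMap.ker f
        = ⨅ i ∈ I, LinearMap.ker (LinearMap.proj (R := F) (φ := fun _ : Fin n => F) i) := by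
      ext c
      simp only [LinearMap.mem_ker, Submodule.mem_iInf, LinearMap.mem_ker, LinearMap.proj_apply]
      constructor
      · intro h i hi
        exact congrFun h ⟨i, hi⟩
      · intro h
        funext j
        exact h j.val j.property
    have hrn := LinearMap.finrank_range_add_finrank_ker (f.domRestrict C)
    have hcomap : LinearMap.ker (f.domRestrict C)
        = Submodule.comap C.subtype (C ⊓ LinearMap.ker f) := by
      rw [LinearMap.ker_domRestrict]
      ext x
      simp [x.property]
    have hequiv : Module.finrank F (LinearMap.ker (f.domRestrict C)) = Module.finrank F S := by
      rw [hcomap]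
      rw [(Submodule.comapSubtypeEquivOfLe (inf_le_left :
        C ⊓ LinearMap.ker f ≤ C)).finrank_eq, hS, hkerf]
    have hrange : Module.finrank F (LinearMap.range (f.domRestrict C)) ≤ I.ncard := by
      have := Submodule.finrank_le (LinearMap.range (f.domRestrict C))
      rw [Module.finrank_pi] at this
      have h2 : I.ncard = Fintype.card I := by
        rw [← Nat.card_coe_set_eq, Nat.card_eq_fintype_card]
      omega
    rw [hequiv, hk] at hrn
    omega
  -- dimension of D
  have hrankD : Module.finrank F D = Module.finrank F S := by
    have hrange : LinearMap.range (g.domRestrict S) = D := by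
      rw [LinearMap.range_domRestrict, hD]
    have hkb : LinearMap.ker (g.domRestrict S) = ⊥ := by
      rw [Submodule.eq_bot_iff]
      intro x hx
      have : (x : Fin n → F) = 0 := hker x x.property hx
      exact Subtype.ext this
    have hrn := LinearMap.finrank_range_add_finrank_ker (g.domRestrict S)
    rw [hrange, hkb, finrank_bot] at hrn
    omega
  have hDdim : k - I.ncard ≤ Module.finrank F D := by omega
  -- minimum distance of D
  have hDw : ∀ y ∈ D, y ≠ 0 → d ≤ hammingNorm y := by
    intro y hy hy0
    rw [hD] at hy
    obtain ⟨c, hc, rfl⟩ := hy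
    have hc0 : c ≠ 0 := fun h => hy0 (by simp [h])
    calc d ≤ hammingNorm c := hd c (hSC hc) hc0
      _ = hammingNorm (g c) := hnorm c hc
  refine ⟨hDdim, hDw, ?_⟩
  -- transport D to Fin (n - Cl.ncard)
  set N := n - Cl.ncard with hN
  have hClcard : Fintype.card Cl = Cl.ncard := by
    rw [← Nat.card_coe_set_eq, Nat.card_eq_fintype_card]
  have hcard : Fintype.card {i : Fin n // i ∉ Cl} = N := by
    rw [Fintype.card_subtype_compl, Fintype.card_fin, hN]
    congr 1
  let e : Fin N ≃ {i : Fin n // i ∉ Cl} := (Fintype.equivFinOfCardEq hcard).symm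
  let E : ({i : Fin n // i ∉ Cl} → F) ≃ₗ[F] (Fin N → F) :=
    LinearEquiv.funCongrLeft F F e
  set D' : Submodule F (Fin N → F) := D.map (E : _ →ₗ[F] _) with hD'
  have hD'rank : Module.finrank F D' = Module.finrank F D :=
    LinearEquiv.finrank_map_eq E D
  have hEnorm : ∀ y : {i : Fin n // i ∉ Cl} → F, hammingNorm (E y) = hammingNorm y := by
    intro y
    exact hammingNorm_comp_equiv e y
  have hmem : d ∈ {d' | ∃ D₀ : Submodule F (Fin N → F),
      k - I.ncard ≤ Module.finrank F D₀ ∧ ∀ c ∈ D₀, c ≠ 0 → d' ≤ hammingNorm c} := by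
    refine ⟨D', by omega, ?_⟩
    intro c hc hc0
    rw [hD'] at hc
    obtain ⟨y, hy, rfl⟩ := hc
    have hy0 : y ≠ 0 := fun h => hc0 (by rw [h]; exact map_zero _)
    calc d ≤ hammingNorm y := hDw y hy hy0
      _ = hammingNorm (E y) := (hEnorm y).symm
  have hbdd : BddAbove {d' | ∃ D₀ : Submodule F (Fin N → F),
      k - I.ncard ≤ Module.finrank F D₀ ∧ ∀ c ∈ D₀, c ≠ 0 → d' ≤ hammingNorm c} := by
    refine ⟨N, ?_⟩
    rintro d' ⟨D₀, hD₀, hw⟩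
    have hK1 : 1 ≤ k - I.ncard := by omega
    have hne : ∃ c ∈ D₀, c ≠ 0 := by
      by_contra h
      push_neg at h
      have : D₀ = ⊥ := by
        rw [Submodule.eq_bot_iff]
        exact fun x hx => by by_contra hx0; exact hx0 (h x hx)
      rw [this, finrank_bot] at hD₀
      omega
    obtain ⟨c, hc, hc0⟩ := hne
    calc d' ≤ hammingNorm c := hw c hc hc0
      _ ≤ N := by
        simpa [hammingNorm] using (Finset.card_filter_le Finset.univ fun i => c i ≠ 0)
  unfold dstar
  exact le_csSup hbdd hmem
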